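/- For an invertible linear map g : ℝ⁴ → ℝ⁴, the following are equivalent: (i) g*α_L¹ = α_L¹ and g*α_L³ = α_L³; (ii) the ℝ-linear map T ∘ g ∘ T⁻¹ : ℂ² → ℂ² is ℂ-linear and has complex determinant equal to 1. In particular, the group G₀ = {g ∈ SL(4,ℝ) : g*α_L¹ = α_L¹, g*α_L³ = α_L³} is isomorphic to SL(2,ℂ) via conjugation by T. -/

import Mathlib

/-!
Work in `V = ℝ⁴` (as `Fin 4 → ℝ`) with standard basis `e i` and dual basis
`ω i`.  Alternating `k`-forms are `V [⋀^Fin k]→ₗ[ℝ] ℝ`; `wedgeF` is the wedge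
product (shuffle convention), `vol4 = ω¹∧ω²∧ω³∧ω⁴`, `pairF` is the pairing
`⟨·,·⟩` on `Λ²V*` determined by `α ∧ β = ⟨α,β⟩ ω¹∧ω²∧ω³∧ω⁴`, and `pullF g α`
is the pullback `(g*α)(u,v) = α (g u) (g v)`.
-/

set_option synthInstance.maxHeartbeats 1000000
set_option maxHeartbeats 4000000

noncomputable section

abbrev V4 : Type := Fin 4 → ℝ

/-- The wedge product of real-valued alternating forms. -/
noncomputable def wedgeF {M : Type} [AddCommGroup M] [Module ℝ M] {a b : ℕ}
    (f : M [⋀^Fin a]→ₗ[ℝ] ℝ) (g : M [⋀^Fin b]→ₗ[ℝ] ℝ) :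
    M [⋀^Fin (a + b)]→ₗ[ℝ] ℝ :=
  ((TensorProduct.lid ℝ ℝ).toLinearMap.compAlternatingMap
    (f.domCoprod g)).domDomCongr finSumFinEquiv

/-- The coordinate 1-forms `ωⁱ` (as alternating 1-forms). -/
noncomputable def dl {n : ℕ} (i : Fin n) : (Fin n → ℝ) [⋀^Fin 1]→ₗ[ℝ] ℝ :=
  AlternatingMap.ofSubsingleton ℝ (Fin n → ℝ) ℝ 0 (LinearMap.proj i)

/-- `ωⁱ ∧ ωʲ` as an alternating 2-form on `ℝ⁴`. -/
noncomputable def ww (i j : Fin 4) : V4 [⋀^Fin 2]→ₗ[ℝ] ℝ := wedgeF (dl i) (dl j)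

/-- The volume form `ω¹∧ω²∧ω³∧ω⁴` on `ℝ⁴`. -/
noncomputable def vol4 : V4 [⋀^Fin 4]→ₗ[ℝ] ℝ := wedgeF (ww 0 1) (ww 2 3)

/-- The standard basis vectors. -/
noncomputable def ev {n : ℕ} (i : Fin n) : Fin n → ℝ := Pi.single i 1

/-- The pairing `⟨α,β⟩` on `Λ²(ℝ⁴)*`, characterized by
`α ∧ β = ⟨α,β⟩ ω¹∧ω²∧ω³∧ω⁴` (defined here as the value of `α ∧ β` on the
standard basis, on which the volume form takes the value `1`). -/
noncomputable def pairF (α β : V4 [⋀^Fin 2]→ₗ[ℝ] ℝ) : ℝ :=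
  wedgeF α β ![ev 0, ev 1, ev 2, ev 3]

/-- Pullback of an alternating form along a linear map:
`(g*α)(v₁,…,v_k) = α (g v₁) … (g v_k)`. -/
noncomputable def pullF {k : ℕ} (g : V4 →ₗ[ℝ] V4) (α : V4 [⋀^Fin k]→ₗ[ℝ] ℝ) :
    V4 [⋀^Fin k]→ₗ[ℝ] ℝ := α.compLinearMap g

/-- `α_L¹ = ω¹∧ω² + ω³∧ω⁴`. -/
noncomputable def αL1 : V4 [⋀^Fin 2]→ₗ[ℝ] ℝ := ww 0 1 + ww 2 3

/-- `α_L³ = ω¹∧ω⁴ + ω²∧ω³`. -/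
noncomputable def αL3 : V4 [⋀^Fin 2]→ₗ[ℝ] ℝ := ww 0 3 + ww 1 2

/-- The ℝ-linear isomorphism `T : ℝ⁴ → ℂ²`,
`T(x¹,x²,x³,x⁴) = (x³ + i x¹, x² + i x⁴)`. -/
noncomputable def Tmap (x : Fin 4 → ℝ) : Fin 2 → ℂ :=
  ![(x 2 : ℂ) + (x 0 : ℂ) * Complex.I, (x 1 : ℂ) + (x 3 : ℂ) * Complex.I]

/-- The inverse of `T`. -/
noncomputable def Tinv (w : Fin 2 → ℂ) : Fin 4 → ℝ :=
  ![(w 0).im, (w 1).re, (w 0).re, (w 1).im]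

abbrev MS := Equiv.Perm.ModSumCongr (Fin 1) (Fin 1)

instance msFT : Fintype (Quotient (QuotientGroup.leftRel (Equiv.Perm.sumCongrHom (Fin 1) (Fin 1)).range)) :=
  inferInstanceAs (Fintype MS)

lemma mk_bij : Function.Bijective (Quotient.mk'' : Equiv.Perm (Fin 1 ⊕ Fin 1) → MS) := by
  constructor
  · intro σ τ h
    rw [Quotient.eq''] at h
    obtain ⟨⟨sl, sr⟩, hh⟩ := QuotientGroup.leftRel_apply.mp h
    have hsl : sl = 1 := Subsingleton.elim _ _
    have hsr : sr = 1 := Subsingleton.elim _ _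
    rw [hsl, hsr] at hh
    simp at hh
    exact inv_mul_eq_one.mp hh.symm
  · intro q
    exact Quotient.inductionOn' q (fun σ => ⟨σ, rfl⟩)

set_option linter.unnecessarySeqFocus false in
lemma wedge11_apply (f g : V4 [⋀^Fin 1]→ₗ[ℝ] ℝ) (u v : V4) :
    wedgeF f g ![u, v] = f ![u] * g ![v] - f ![v] * g ![u] := by
  rw [wedgeF]
  rw [AlternatingMap.domDomCongr_apply, LinearMap.compAlternatingMap_apply]
  rw [show ((f.domCoprod g) (![u,v] ∘ finSumFinEquiv)) = (∑ σ : MS, AlternatingMap.domCoprod.summand f g σ) (![u,v] ∘ finSumFinEquiv) from rfl]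
  rw [MultilinearMap.sum_apply]
  have hsum : (∑ σ : MS, (AlternatingMap.domCoprod.summand f g σ) (![u,v] ∘ finSumFinEquiv))
      = ∑ σ : Equiv.Perm (Fin 1 ⊕ Fin 1), (AlternatingMap.domCoprod.summand f g (Quotient.mk'' σ)) (![u,v] ∘ finSumFinEquiv) := by
    exact (Fintype.sum_bijective _ mk_bij _ _ (fun _ => rfl)).symm
  rw [hsum]
  rw [show (Finset.univ : Finset (Equiv.Perm (Fin 1 ⊕ Fin 1))) = {1, Equiv.swap (Sum.inl 0) (Sum.inr 0)} from by decide]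
  rw [Finset.sum_insert (by decide), Finset.sum_singleton]
  simp only [AlternatingMap.domCoprod.summand_mk'', MultilinearMap.domDomCongr_apply,
    MultilinearMap.domCoprod_apply, AlternatingMap.coe_multilinearMap, MultilinearMap.smul_apply]
  rw [show (fun i : Fin 1 => (![u, v] ∘ ⇑finSumFinEquiv) ((1 : Equiv.Perm (Fin 1 ⊕ Fin 1)) (Sum.inl i))) = ![u] from funext fun i => by fin_cases i <;> rfl]
  rw [show (fun i : Fin 1 => (![u, v] ∘ ⇑finSumFinEquiv) ((1 : Equiv.Perm (Fin 1 ⊕ Fin 1)) (Sum.inr i))) = ![v] from funext fun i => by fin_cases i <;> rfl]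
  rw [show (fun i : Fin 1 => (![u, v] ∘ ⇑finSumFinEquiv) ((Equiv.swap (Sum.inl 0) (Sum.inr 0) : Equiv.Perm (Fin 1 ⊕ Fin 1)) (Sum.inl i))) = ![v] from funext fun i => by fin_cases i <;> rfl]
  rw [show (fun i : Fin 1 => (![u, v] ∘ ⇑finSumFinEquiv) ((Equiv.swap (Sum.inl 0) (Sum.inr 0) : Equiv.Perm (Fin 1 ⊕ Fin 1)) (Sum.inr i))) = ![u] from funext fun i => by fin_cases i <;> rfl]
  rw [Equiv.Perm.sign_swap (by decide)]
  simp [TensorProduct.lid_tmul]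
  ring

lemma dl_apply {n : ℕ} (i : Fin n) (u : Fin n → ℝ) : dl i ![u] = u i := by
  simp [dl]

lemma ww_apply (i j : Fin 4) (u v : V4) : ww i j ![u, v] = u i * v j - v i * u j := by
  rw [ww, wedge11_apply, dl_apply, dl_apply, dl_apply, dl_apply]

lemma a1_apply (u v : V4) :
    αL1 ![u, v] = u 0 * v 1 - v 0 * u 1 + (u 2 * v 3 - v 2 * u 3) := by
  rw [αL1, AlternatingMap.add_apply, ww_apply, ww_apply]

lemma a3_apply (u v : V4) :
    αL3 ![u, v] = u 0 * v 3 - v 0 * u 3 + (u 1 * v 2 - v 1 * u 2) := by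
  rw [αL3, AlternatingMap.add_apply, ww_apply, ww_apply]

lemma pull2_apply (g : V4 →ₗ[ℝ] V4) (α : V4 [⋀^Fin 2]→ₗ[ℝ] ℝ) (u v : V4) :
    pullF g α ![u, v] = α ![g u, g v] := by
  rw [pullF, AlternatingMap.compLinearMap_apply]
  congr 1
  funext k
  fin_cases k <;> rfl

lemma form_ext {α β : V4 [⋀^Fin 2]→ₗ[ℝ] ℝ}
    (h : ∀ i j : Fin 4, α ![ev i, ev j] = β ![ev i, ev j]) : α = β := by
  apply Module.Basis.ext_alternating (Pi.basisFun ℝ (Fin 4))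
  intro v _
  have hv : (fun i => (Pi.basisFun ℝ (Fin 4)) (v i)) = ![ev (v 0), ev (v 1)] := by
    funext k
    fin_cases k <;> simp [Pi.basisFun_apply, ev]
  rw [hv]
  exact h (v 0) (v 1)

/-- for an invertible linear `g : ℝ⁴ → ℝ⁴`, the conditions
`g*α_L¹ = α_L¹` and `g*α_L³ = α_L³` hold iff `T ∘ g ∘ T⁻¹ : ℂ² → ℂ²` is
ℂ-linear with complex determinant 1 (i.e. it is given by a complex 2×2 matrix
`A` with `det A = 1`); so `G₀` is isomorphic to `SL(2,ℂ)` via conjugation by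
`T`. -/
theorem stmt_13 (g : V4 →ₗ[ℝ] V4) (hg : Function.Bijective g) :
    (pullF g αL1 = αL1 ∧ pullF g αL3 = αL3) ↔
    (∃ A : Matrix (Fin 2) (Fin 2) ℂ, A.det = 1 ∧
      ∀ v : Fin 2 → ℂ, Tmap (g (Tinv v)) = A.mulVec v) := by
  constructor
  · rintro ⟨hL1, hL3⟩
    have hv1_01 : αL1 ![ev 0, ev 1] = 1 := by
      rw [a1_apply]
      simp (config := { decide := true }) [ev, Pi.single_apply]
    have hE1_01 := congrArg (fun F : V4 [⋀^Fin 2]→ₗ[ℝ] ℝ => F ![ev 0, ev 1]) hL1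
    rw [pull2_apply, hv1_01, a1_apply] at hE1_01
    have hv1_02 : αL1 ![ev 0, ev 2] = 0 := by
      rw [a1_apply]
      simp (config := { decide := true }) [ev, Pi.single_apply]
    have hE1_02 := congrArg (fun F : V4 [⋀^Fin 2]→ₗ[ℝ] ℝ => F ![ev 0, ev 2]) hL1
    rw [pull2_apply, hv1_02, a1_apply] at hE1_02
    have hv1_03 : αL1 ![ev 0, ev 3] = 0 := by
      rw [a1_apply]
      simp (config := { decide := true }) [ev, Pi.single_apply]
    have hE1_03 := congrArg (fun F : V4 [⋀^Fin 2]→ₗ[ℝ] ℝ => F ![ev 0, ev 3]) hL1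
    rw [pull2_apply, hv1_03, a1_apply] at hE1_03
    have hv1_12 : αL1 ![ev 1, ev 2] = 0 := by
      rw [a1_apply]
      simp (config := { decide := true }) [ev, Pi.single_apply]
    have hE1_12 := congrArg (fun F : V4 [⋀^Fin 2]→ₗ[ℝ] ℝ => F ![ev 1, ev 2]) hL1
    rw [pull2_apply, hv1_12, a1_apply] at hE1_12
    have hv1_13 : αL1 ![ev 1, ev 3] = 0 := by
      rw [a1_apply]
      simp (config := { decide := true }) [ev, Pi.single_apply]
    have hE1_13 := congrArg (fun F : V4 [⋀^Fin 2]→ₗ[ℝ] ℝ => F ![ev 1, ev 3]) hL1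
    rw [pull2_apply, hv1_13, a1_apply] at hE1_13
    have hv1_23 : αL1 ![ev 2, ev 3] = 1 := by
      rw [a1_apply]
      simp (config := { decide := true }) [ev, Pi.single_apply]
    have hE1_23 := congrArg (fun F : V4 [⋀^Fin 2]→ₗ[ℝ] ℝ => F ![ev 2, ev 3]) hL1
    rw [pull2_apply, hv1_23, a1_apply] at hE1_23
    have hv3_01 : αL3 ![ev 0, ev 1] = 0 := by
      rw [a3_apply]
      simp (config := { decide := true }) [ev, Pi.single_apply]
    have hE3_01 := congrArg (fun F : V4 [⋀^Fin 2]→ₗ[ℝ] ℝ => F ![ev 0, ev 1]) hL3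
    rw [pull2_apply, hv3_01, a3_apply] at hE3_01
    have hv3_02 : αL3 ![ev 0, ev 2] = 0 := by
      rw [a3_apply]
      simp (config := { decide := true }) [ev, Pi.single_apply]
    have hE3_02 := congrArg (fun F : V4 [⋀^Fin 2]→ₗ[ℝ] ℝ => F ![ev 0, ev 2]) hL3
    rw [pull2_apply, hv3_02, a3_apply] at hE3_02
    have hv3_03 : αL3 ![ev 0, ev 3] = 1 := by
      rw [a3_apply]
      simp (config := { decide := true }) [ev, Pi.single_apply]
    have hE3_03 := congrArg (fun F : V4 [⋀^Fin 2]→ₗ[ℝ] ℝ => F ![ev 0, ev 3]) hL3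
    rw [pull2_apply, hv3_03, a3_apply] at hE3_03
    have hv3_12 : αL3 ![ev 1, ev 2] = 1 := by
      rw [a3_apply]
      simp (config := { decide := true }) [ev, Pi.single_apply]
    have hE3_12 := congrArg (fun F : V4 [⋀^Fin 2]→ₗ[ℝ] ℝ => F ![ev 1, ev 2]) hL3
    rw [pull2_apply, hv3_12, a3_apply] at hE3_12
    have hv3_13 : αL3 ![ev 1, ev 3] = 0 := by
      rw [a3_apply]
      simp (config := { decide := true }) [ev, Pi.single_apply]
    have hE3_13 := congrArg (fun F : V4 [⋀^Fin 2]→ₗ[ℝ] ℝ => F ![ev 1, ev 3]) hL3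
    rw [pull2_apply, hv3_13, a3_apply] at hE3_13
    have hv3_23 : αL3 ![ev 2, ev 3] = 0 := by
      rw [a3_apply]
      simp (config := { decide := true }) [ev, Pi.single_apply]
    have hE3_23 := congrArg (fun F : V4 [⋀^Fin 2]→ₗ[ℝ] ℝ => F ![ev 2, ev 3]) hL3
    rw [pull2_apply, hv3_23, a3_apply] at hE3_23
    have hQ1 : g (ev 2) 2 - g (ev 0) 0 = 0 := by
      linear_combination ((-1/2 : ℝ) * g (ev 2) 2) * hE1_01 + ((1/2 : ℝ) * g (ev 1) 2 + (1/2 : ℝ) * g (ev 3) 0) * hE1_02 + ((-1/2 : ℝ) * g (ev 2) 0) * hE1_03 + ((-1/2 : ℝ) * g (ev 0) 2) * hE1_12 + ((1/2 : ℝ) * g (ev 0) 0) * hE1_23 + ((1/2 : ℝ) * g (ev 2) 0) * hE3_01 + ((-1/2 : ℝ) * g (ev 1) 0 + (1/2 : ℝ) * g (ev 3) 2) * hE3_02 + ((-1/2 : ℝ) * g (ev 2) 2) * hE3_03 + ((1/2 : ℝ) * g (ev 0) 0) * hE3_12 + ((1/2 : ℝ) * g (ev 0) 2) * hE3_23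
    have hQ2 : g (ev 2) 0 + g (ev 0) 2 = 0 := by
      linear_combination ((-1/2 : ℝ) * g (ev 2) 0) * hE1_01 + ((1/2 : ℝ) * g (ev 1) 0 + (-1/2 : ℝ) * g (ev 3) 2) * hE1_02 + ((1/2 : ℝ) * g (ev 2) 2) * hE1_03 + ((-1/2 : ℝ) * g (ev 0) 0) * hE1_12 + ((-1/2 : ℝ) * g (ev 0) 2) * hE1_23 + ((-1/2 : ℝ) * g (ev 2) 2) * hE3_01 + ((1/2 : ℝ) * g (ev 1) 2 + (1/2 : ℝ) * g (ev 3) 0) * hE3_02 + ((-1/2 : ℝ) * g (ev 2) 0) * hE3_03 + ((-1/2 : ℝ) * g (ev 0) 2) * hE3_12 + ((1/2 : ℝ) * g (ev 0) 0) * hE3_23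
    have hQ3 : g (ev 1) 2 - g (ev 3) 0 = 0 := by
      linear_combination ((1/2 : ℝ) * g (ev 3) 0) * hE1_01 + ((-1/2 : ℝ) * g (ev 1) 0) * hE1_03 + ((-1/2 : ℝ) * g (ev 3) 2) * hE1_12 + ((1/2 : ℝ) * g (ev 0) 0 + (1/2 : ℝ) * g (ev 2) 2) * hE1_13 + ((-1/2 : ℝ) * g (ev 1) 2) * hE1_23 + ((1/2 : ℝ) * g (ev 3) 2) * hE3_01 + ((-1/2 : ℝ) * g (ev 1) 2) * hE3_03 + ((1/2 : ℝ) * g (ev 3) 0) * hE3_12 + ((1/2 : ℝ) * g (ev 0) 2 + (-1/2 : ℝ) * g (ev 2) 0) * hE3_13 + ((1/2 : ℝ) * g (ev 1) 0) * hE3_23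
    have hQ4 : g (ev 1) 0 + g (ev 3) 2 = 0 := by
      linear_combination ((-1/2 : ℝ) * g (ev 3) 2) * hE1_01 + ((1/2 : ℝ) * g (ev 1) 2) * hE1_03 + ((-1/2 : ℝ) * g (ev 3) 0) * hE1_12 + ((-1/2 : ℝ) * g (ev 0) 2 + (1/2 : ℝ) * g (ev 2) 0) * hE1_13 + ((-1/2 : ℝ) * g (ev 1) 0) * hE1_23 + ((1/2 : ℝ) * g (ev 3) 0) * hE3_01 + ((-1/2 : ℝ) * g (ev 1) 0) * hE3_03 + ((-1/2 : ℝ) * g (ev 3) 2) * hE3_12 + ((1/2 : ℝ) * g (ev 0) 0 + (1/2 : ℝ) * g (ev 2) 2) * hE3_13 + ((-1/2 : ℝ) * g (ev 1) 2) * hE3_23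
    have hQ5 : g (ev 2) 1 - g (ev 0) 3 = 0 := by
      linear_combination ((-1/2 : ℝ) * g (ev 2) 1) * hE1_01 + ((1/2 : ℝ) * g (ev 1) 1 + (1/2 : ℝ) * g (ev 3) 3) * hE1_02 + ((-1/2 : ℝ) * g (ev 2) 3) * hE1_03 + ((-1/2 : ℝ) * g (ev 0) 1) * hE1_12 + ((1/2 : ℝ) * g (ev 0) 3) * hE1_23 + ((1/2 : ℝ) * g (ev 2) 3) * hE3_01 + ((-1/2 : ℝ) * g (ev 1) 3 + (1/2 : ℝ) * g (ev 3) 1) * hE3_02 + ((-1/2 : ℝ) * g (ev 2) 1) * hE3_03 + ((1/2 : ℝ) * g (ev 0) 3) * hE3_12 + ((1/2 : ℝ) * g (ev 0) 1) * hE3_23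
    have hQ6 : g (ev 2) 3 + g (ev 0) 1 = 0 := by
      linear_combination ((-1/2 : ℝ) * g (ev 2) 3) * hE1_01 + ((1/2 : ℝ) * g (ev 1) 3 + (-1/2 : ℝ) * g (ev 3) 1) * hE1_02 + ((1/2 : ℝ) * g (ev 2) 1) * hE1_03 + ((-1/2 : ℝ) * g (ev 0) 3) * hE1_12 + ((-1/2 : ℝ) * g (ev 0) 1) * hE1_23 + ((-1/2 : ℝ) * g (ev 2) 1) * hE3_01 + ((1/2 : ℝ) * g (ev 1) 1 + (1/2 : ℝ) * g (ev 3) 3) * hE3_02 + ((-1/2 : ℝ) * g (ev 2) 3) * hE3_03 + ((-1/2 : ℝ) * g (ev 0) 1) * hE3_12 + ((1/2 : ℝ) * g (ev 0) 3) * hE3_23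
    have hQ7 : g (ev 1) 1 - g (ev 3) 3 = 0 := by
      linear_combination ((1/2 : ℝ) * g (ev 3) 3) * hE1_01 + ((-1/2 : ℝ) * g (ev 1) 3) * hE1_03 + ((-1/2 : ℝ) * g (ev 3) 1) * hE1_12 + ((1/2 : ℝ) * g (ev 0) 3 + (1/2 : ℝ) * g (ev 2) 1) * hE1_13 + ((-1/2 : ℝ) * g (ev 1) 1) * hE1_23 + ((1/2 : ℝ) * g (ev 3) 1) * hE3_01 + ((-1/2 : ℝ) * g (ev 1) 1) * hE3_03 + ((1/2 : ℝ) * g (ev 3) 3) * hE3_12 + ((1/2 : ℝ) * g (ev 0) 1 + (-1/2 : ℝ) * g (ev 2) 3) * hE3_13 + ((1/2 : ℝ) * g (ev 1) 3) * hE3_23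
    have hQ8 : g (ev 1) 3 + g (ev 3) 1 = 0 := by
      linear_combination ((-1/2 : ℝ) * g (ev 3) 1) * hE1_01 + ((1/2 : ℝ) * g (ev 1) 1) * hE1_03 + ((-1/2 : ℝ) * g (ev 3) 3) * hE1_12 + ((-1/2 : ℝ) * g (ev 0) 1 + (1/2 : ℝ) * g (ev 2) 3) * hE1_13 + ((-1/2 : ℝ) * g (ev 1) 3) * hE1_23 + ((1/2 : ℝ) * g (ev 3) 3) * hE3_01 + ((-1/2 : ℝ) * g (ev 1) 3) * hE3_03 + ((-1/2 : ℝ) * g (ev 3) 1) * hE3_12 + ((1/2 : ℝ) * g (ev 0) 3 + (1/2 : ℝ) * g (ev 2) 1) * hE3_13 + ((-1/2 : ℝ) * g (ev 1) 1) * hE3_23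
    have hD1 : g (ev 2) 2 * g (ev 1) 1 - g (ev 2) 0 * g (ev 1) 3 - (g (ev 1) 2 * g (ev 2) 1 - g (ev 1) 0 * g (ev 2) 3) = 1 := by
      linear_combination ((1/4 : ℝ)) * hE1_01 + ((1/4 : ℝ)) * hE1_23 + ((1/4 : ℝ)) * hE3_03 + ((1/4 : ℝ)) * hE3_12 + ((1/2 : ℝ) * g (ev 1) 1) * hQ1 + ((-1/2 : ℝ) * g (ev 1) 3) * hQ2 + ((-1/2 : ℝ) * g (ev 2) 1) * hQ3 + ((1/2 : ℝ) * g (ev 2) 3) * hQ4 + ((-1/4 : ℝ) * g (ev 1) 2 + (-1/4 : ℝ) * g (ev 3) 0) * hQ5 + ((1/4 : ℝ) * g (ev 1) 0 + (-1/4 : ℝ) * g (ev 3) 2) * hQ6 + ((1/4 : ℝ) * g (ev 0) 0 + (1/4 : ℝ) * g (ev 2) 2) * hQ7 + ((1/4 : ℝ) * g (ev 0) 2 + (-1/4 : ℝ) * g (ev 2) 0) * hQ8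
    have hD2 : g (ev 2) 2 * g (ev 1) 3 + g (ev 2) 0 * g (ev 1) 1 - (g (ev 1) 2 * g (ev 2) 3 + g (ev 1) 0 * g (ev 2) 1) = 0 := by
      linear_combination ((-1/4 : ℝ)) * hE1_03 + ((-1/4 : ℝ)) * hE1_12 + ((1/4 : ℝ)) * hE3_01 + ((1/4 : ℝ)) * hE3_23 + ((1/2 : ℝ) * g (ev 1) 3) * hQ1 + ((1/2 : ℝ) * g (ev 1) 1) * hQ2 + ((-1/2 : ℝ) * g (ev 2) 3) * hQ3 + ((-1/2 : ℝ) * g (ev 2) 1) * hQ4 + ((-1/4 : ℝ) * g (ev 1) 0 + (1/4 : ℝ) * g (ev 3) 2) * hQ5 + ((-1/4 : ℝ) * g (ev 1) 2 + (-1/4 : ℝ) * g (ev 3) 0) * hQ6 + ((-1/4 : ℝ) * g (ev 0) 2 + (1/4 : ℝ) * g (ev 2) 0) * hQ7 + ((1/4 : ℝ) * g (ev 0) 0 + (1/4 : ℝ) * g (ev 2) 2) * hQ8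
    refine ⟨Matrix.of ![![(g (ev 2) 2 : ℂ) + (g (ev 2) 0 : ℂ) * Complex.I, (g (ev 1) 2 : ℂ) + (g (ev 1) 0 : ℂ) * Complex.I], ![(g (ev 2) 1 : ℂ) + (g (ev 2) 3 : ℂ) * Complex.I, (g (ev 1) 1 : ℂ) + (g (ev 1) 3 : ℂ) * Complex.I]], ?_, ?_⟩
    · rw [Matrix.det_fin_two]
      simp only [Matrix.of_apply, Matrix.cons_val', Matrix.cons_val_zero, Matrix.cons_val_one,
        Matrix.head_cons, Matrix.empty_val', Matrix.cons_val_fin_one, Matrix.head_fin_const]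
      rw [Complex.ext_iff]
      constructor
      · simp only [Complex.add_re, Complex.add_im, Complex.sub_re, Complex.sub_im, Complex.mul_re,
          Complex.mul_im, Complex.one_re, Complex.one_im, Complex.ofReal_re, Complex.ofReal_im,
          Complex.I_re, Complex.I_im]
        linear_combination hD1
      · simp only [Complex.add_re, Complex.add_im, Complex.sub_re, Complex.sub_im, Complex.mul_re,
          Complex.mul_im, Complex.one_re, Complex.one_im, Complex.ofReal_re, Complex.ofReal_im,
          Complex.I_re, Complex.I_im]
        linear_combination hD2
    · intro v
      have hTi : Tinv v = (v 0).im • ev 0 + (v 1).re • ev 1 + (v 0).re • ev 2 + (v 1).im • ev 3 := by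
        funext k
        fin_cases k <;> simp (config := { decide := true }) [Tinv, ev, Pi.single_apply]
      rw [hTi, map_add, map_add, map_add, map_smul, map_smul, map_smul, map_smul]
      funext p
      fin_cases p
      · simp only [Fin.zero_eta, Fin.mk_one, Fin.isValue, Tmap, Pi.add_apply, Pi.smul_apply, smul_eq_mul, Matrix.cons_val_zero,
          Matrix.cons_val_one, Matrix.head_cons, Matrix.mulVec, dotProduct,
          Fin.sum_univ_two, Matrix.of_apply, Matrix.cons_val', Matrix.empty_val',
          Matrix.cons_val_fin_one, Matrix.head_fin_const]
        rw [Complex.ext_iff]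
        constructor
        · push_cast
          simp only [Complex.add_re, Complex.add_im, Complex.mul_re, Complex.mul_im,
            Complex.ofReal_re, Complex.ofReal_im, Complex.I_re, Complex.I_im]
          ring_nf
          linear_combination (v 0).im * hQ2 + (v 1).im * hQ4
        · push_cast
          simp only [Complex.add_re, Complex.add_im, Complex.mul_re, Complex.mul_im,
            Complex.ofReal_re, Complex.ofReal_im, Complex.I_re, Complex.I_im]
          ring_nf
          linear_combination (-(v 0).im) * hQ1 + (-(v 1).im) * hQ3
      · simp only [Fin.zero_eta, Fin.mk_one, Fin.isValue, Tmap, Pi.add_apply, Pi.smul_apply, smul_eq_mul, Matrix.cons_val_zero,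
          Matrix.cons_val_one, Matrix.head_cons, Matrix.mulVec, dotProduct,
          Fin.sum_univ_two, Matrix.of_apply, Matrix.cons_val', Matrix.empty_val',
          Matrix.cons_val_fin_one, Matrix.head_fin_const]
        rw [Complex.ext_iff]
        constructor
        · push_cast
          simp only [Complex.add_re, Complex.add_im, Complex.mul_re, Complex.mul_im,
            Complex.ofReal_re, Complex.ofReal_im, Complex.I_re, Complex.I_im]
          ring_nf
          linear_combination (v 0).im * hQ6 + (v 1).im * hQ8
        · push_cast
          simp only [Complex.add_re, Complex.add_im, Complex.mul_re, Complex.mul_im,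
            Complex.ofReal_re, Complex.ofReal_im, Complex.I_re, Complex.I_im]
          ring_nf
          linear_combination (-(v 0).im) * hQ5 + (-(v 1).im) * hQ7
  · rintro ⟨A, hdet, hfun⟩
    rw [Matrix.det_fin_two] at hdet
    rw [Complex.ext_iff] at hdet
    obtain ⟨hre, him⟩ := hdet
    simp only [Complex.add_re, Complex.add_im, Complex.sub_re, Complex.sub_im, Complex.mul_re,
      Complex.mul_im, Complex.one_re, Complex.one_im] at hre him
    have ht2 : Tinv ![(1:ℂ), 0] = ev 2 := by
      funext k; fin_cases k <;> simp [Tinv, ev, Pi.single_apply]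
    have ht0 : Tinv ![Complex.I, 0] = ev 0 := by
      funext k; fin_cases k <;> simp [Tinv, ev, Pi.single_apply]
    have ht1 : Tinv ![0, (1:ℂ)] = ev 1 := by
      funext k; fin_cases k <;> simp [Tinv, ev, Pi.single_apply]
    have ht3 : Tinv ![0, Complex.I] = ev 3 := by
      funext k; fin_cases k <;> simp [Tinv, ev, Pi.single_apply]
    have h2 := hfun ![(1:ℂ), 0]; rw [ht2] at h2
    have h0 := hfun ![Complex.I, 0]; rw [ht0] at h0
    have h1 := hfun ![0, (1:ℂ)]; rw [ht1] at h1
    have h3 := hfun ![0, Complex.I]; rw [ht3] at h3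
    have h2a := congrFun h2 0
    have h2b := congrFun h2 1
    have h0a := congrFun h0 0
    have h0b := congrFun h0 1
    have h1a := congrFun h1 0
    have h1b := congrFun h1 1
    have h3a := congrFun h3 0
    have h3b := congrFun h3 1
    simp only [Tmap, Matrix.mulVec, dotProduct, Fin.sum_univ_two, Matrix.cons_val_zero,
      Matrix.cons_val_one, Matrix.head_cons, mul_one, mul_zero, add_zero, zero_add] at h2a h2b h0a h0b h1a h1b h3a h3b
    have f22 : g (ev 2) 2 = (A 0 0).re := by simpa using congrArg Complex.re h2a
    have f20 : g (ev 2) 0 = (A 0 0).im := by simpa using congrArg Complex.im h2a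
    have f21 : g (ev 2) 1 = (A 1 0).re := by simpa using congrArg Complex.re h2b
    have f23 : g (ev 2) 3 = (A 1 0).im := by simpa using congrArg Complex.im h2b
    have f02 : g (ev 0) 2 = -((A 0 0).im) := by simpa using congrArg Complex.re h0a
    have f00 : g (ev 0) 0 = (A 0 0).re := by simpa using congrArg Complex.im h0a
    have f01 : g (ev 0) 1 = -((A 1 0).im) := by simpa using congrArg Complex.re h0b
    have f03 : g (ev 0) 3 = (A 1 0).re := by simpa using congrArg Complex.im h0b
    have f12 : g (ev 1) 2 = (A 0 1).re := by simpa using congrArg Complex.re h1a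
    have f10 : g (ev 1) 0 = (A 0 1).im := by simpa using congrArg Complex.im h1a
    have f11 : g (ev 1) 1 = (A 1 1).re := by simpa using congrArg Complex.re h1b
    have f13 : g (ev 1) 3 = (A 1 1).im := by simpa using congrArg Complex.im h1b
    have f32 : g (ev 3) 2 = -((A 0 1).im) := by simpa using congrArg Complex.re h3a
    have f30 : g (ev 3) 0 = (A 0 1).re := by simpa using congrArg Complex.im h3a
    have f31 : g (ev 3) 1 = -((A 1 1).im) := by simpa using congrArg Complex.re h3b
    have f33 : g (ev 3) 3 = (A 1 1).re := by simpa using congrArg Complex.im h3b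
    have hb1_00 : αL1 ![g (ev 0), g (ev 0)] = αL1 ![ev 0, ev 0] := by
      rw [a1_apply, a1_apply]
      simp only [f22, f20, f21, f23, f02, f00, f01, f03, f12, f10, f11, f13, f32, f30, f31, f33]
      simp (config := { decide := true }) [ev, Pi.single_apply]
      try ring
    have hb1_01 : αL1 ![g (ev 0), g (ev 1)] = αL1 ![ev 0, ev 1] := by
      rw [a1_apply, a1_apply]
      simp only [f22, f20, f21, f23, f02, f00, f01, f03, f12, f10, f11, f13, f32, f30, f31, f33]
      simp (config := { decide := true }) [ev, Pi.single_apply]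
      linear_combination (1 : ℝ) * hre
    have hb1_02 : αL1 ![g (ev 0), g (ev 2)] = αL1 ![ev 0, ev 2] := by
      rw [a1_apply, a1_apply]
      simp only [f22, f20, f21, f23, f02, f00, f01, f03, f12, f10, f11, f13, f32, f30, f31, f33]
      simp (config := { decide := true }) [ev, Pi.single_apply]
      try ring
    have hb1_03 : αL1 ![g (ev 0), g (ev 3)] = αL1 ![ev 0, ev 3] := by
      rw [a1_apply, a1_apply]
      simp only [f22, f20, f21, f23, f02, f00, f01, f03, f12, f10, f11, f13, f32, f30, f31, f33]
      simp (config := { decide := true }) [ev, Pi.single_apply]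
      linear_combination (-1 : ℝ) * him
    have hb1_10 : αL1 ![g (ev 1), g (ev 0)] = αL1 ![ev 1, ev 0] := by
      rw [a1_apply, a1_apply]
      simp only [f22, f20, f21, f23, f02, f00, f01, f03, f12, f10, f11, f13, f32, f30, f31, f33]
      simp (config := { decide := true }) [ev, Pi.single_apply]
      linear_combination (-1 : ℝ) * hre
    have hb1_11 : αL1 ![g (ev 1), g (ev 1)] = αL1 ![ev 1, ev 1] := by
      rw [a1_apply, a1_apply]
      simp only [f22, f20, f21, f23, f02, f00, f01, f03, f12, f10, f11, f13, f32, f30, f31, f33]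
      simp (config := { decide := true }) [ev, Pi.single_apply]
      try ring
    have hb1_12 : αL1 ![g (ev 1), g (ev 2)] = αL1 ![ev 1, ev 2] := by
      rw [a1_apply, a1_apply]
      simp only [f22, f20, f21, f23, f02, f00, f01, f03, f12, f10, f11, f13, f32, f30, f31, f33]
      simp (config := { decide := true }) [ev, Pi.single_apply]
      linear_combination (-1 : ℝ) * him
    have hb1_13 : αL1 ![g (ev 1), g (ev 3)] = αL1 ![ev 1, ev 3] := by
      rw [a1_apply, a1_apply]
      simp only [f22, f20, f21, f23, f02, f00, f01, f03, f12, f10, f11, f13, f32, f30, f31, f33]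
      simp (config := { decide := true }) [ev, Pi.single_apply]
      try ring
    have hb1_20 : αL1 ![g (ev 2), g (ev 0)] = αL1 ![ev 2, ev 0] := by
      rw [a1_apply, a1_apply]
      simp only [f22, f20, f21, f23, f02, f00, f01, f03, f12, f10, f11, f13, f32, f30, f31, f33]
      simp (config := { decide := true }) [ev, Pi.single_apply]
      try ring
    have hb1_21 : αL1 ![g (ev 2), g (ev 1)] = αL1 ![ev 2, ev 1] := by
      rw [a1_apply, a1_apply]
      simp only [f22, f20, f21, f23, f02, f00, f01, f03, f12, f10, f11, f13, f32, f30, f31, f33]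
      simp (config := { decide := true }) [ev, Pi.single_apply]
      linear_combination (1 : ℝ) * him
    have hb1_22 : αL1 ![g (ev 2), g (ev 2)] = αL1 ![ev 2, ev 2] := by
      rw [a1_apply, a1_apply]
      simp only [f22, f20, f21, f23, f02, f00, f01, f03, f12, f10, f11, f13, f32, f30, f31, f33]
      simp (config := { decide := true }) [ev, Pi.single_apply]
      try ring
    have hb1_23 : αL1 ![g (ev 2), g (ev 3)] = αL1 ![ev 2, ev 3] := by
      rw [a1_apply, a1_apply]
      simp only [f22, f20, f21, f23, f02, f00, f01, f03, f12, f10, f11, f13, f32, f30, f31, f33]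
      simp (config := { decide := true }) [ev, Pi.single_apply]
      linear_combination (1 : ℝ) * hre
    have hb1_30 : αL1 ![g (ev 3), g (ev 0)] = αL1 ![ev 3, ev 0] := by
      rw [a1_apply, a1_apply]
      simp only [f22, f20, f21, f23, f02, f00, f01, f03, f12, f10, f11, f13, f32, f30, f31, f33]
      simp (config := { decide := true }) [ev, Pi.single_apply]
      linear_combination (1 : ℝ) * him
    have hb1_31 : αL1 ![g (ev 3), g (ev 1)] = αL1 ![ev 3, ev 1] := by
      rw [a1_apply, a1_apply]
      simp only [f22, f20, f21, f23, f02, f00, f01, f03, f12, f10, f11, f13, f32, f30, f31, f33]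
      simp (config := { decide := true }) [ev, Pi.single_apply]
      try ring
    have hb1_32 : αL1 ![g (ev 3), g (ev 2)] = αL1 ![ev 3, ev 2] := by
      rw [a1_apply, a1_apply]
      simp only [f22, f20, f21, f23, f02, f00, f01, f03, f12, f10, f11, f13, f32, f30, f31, f33]
      simp (config := { decide := true }) [ev, Pi.single_apply]
      linear_combination (-1 : ℝ) * hre
    have hb1_33 : αL1 ![g (ev 3), g (ev 3)] = αL1 ![ev 3, ev 3] := by
      rw [a1_apply, a1_apply]
      simp only [f22, f20, f21, f23, f02, f00, f01, f03, f12, f10, f11, f13, f32, f30, f31, f33]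
      simp (config := { decide := true }) [ev, Pi.single_apply]
      try ring
    have hb3_00 : αL3 ![g (ev 0), g (ev 0)] = αL3 ![ev 0, ev 0] := by
      rw [a3_apply, a3_apply]
      simp only [f22, f20, f21, f23, f02, f00, f01, f03, f12, f10, f11, f13, f32, f30, f31, f33]
      simp (config := { decide := true }) [ev, Pi.single_apply]
      try ring
    have hb3_01 : αL3 ![g (ev 0), g (ev 1)] = αL3 ![ev 0, ev 1] := by
      rw [a3_apply, a3_apply]
      simp only [f22, f20, f21, f23, f02, f00, f01, f03, f12, f10, f11, f13, f32, f30, f31, f33]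
      simp (config := { decide := true }) [ev, Pi.single_apply]
      linear_combination (1 : ℝ) * him
    have hb3_02 : αL3 ![g (ev 0), g (ev 2)] = αL3 ![ev 0, ev 2] := by
      rw [a3_apply, a3_apply]
      simp only [f22, f20, f21, f23, f02, f00, f01, f03, f12, f10, f11, f13, f32, f30, f31, f33]
      simp (config := { decide := true }) [ev, Pi.single_apply]
      try ring
    have hb3_03 : αL3 ![g (ev 0), g (ev 3)] = αL3 ![ev 0, ev 3] := by
      rw [a3_apply, a3_apply]
      simp only [f22, f20, f21, f23, f02, f00, f01, f03, f12, f10, f11, f13, f32, f30, f31, f33]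
      simp (config := { decide := true }) [ev, Pi.single_apply]
      linear_combination (1 : ℝ) * hre
    have hb3_10 : αL3 ![g (ev 1), g (ev 0)] = αL3 ![ev 1, ev 0] := by
      rw [a3_apply, a3_apply]
      simp only [f22, f20, f21, f23, f02, f00, f01, f03, f12, f10, f11, f13, f32, f30, f31, f33]
      simp (config := { decide := true }) [ev, Pi.single_apply]
      linear_combination (-1 : ℝ) * him
    have hb3_11 : αL3 ![g (ev 1), g (ev 1)] = αL3 ![ev 1, ev 1] := by
      rw [a3_apply, a3_apply]
      simp only [f22, f20, f21, f23, f02, f00, f01, f03, f12, f10, f11, f13, f32, f30, f31, f33]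
      simp (config := { decide := true }) [ev, Pi.single_apply]
      try ring
    have hb3_12 : αL3 ![g (ev 1), g (ev 2)] = αL3 ![ev 1, ev 2] := by
      rw [a3_apply, a3_apply]
      simp only [f22, f20, f21, f23, f02, f00, f01, f03, f12, f10, f11, f13, f32, f30, f31, f33]
      simp (config := { decide := true }) [ev, Pi.single_apply]
      linear_combination (1 : ℝ) * hre
    have hb3_13 : αL3 ![g (ev 1), g (ev 3)] = αL3 ![ev 1, ev 3] := by
      rw [a3_apply, a3_apply]
      simp only [f22, f20, f21, f23, f02, f00, f01, f03, f12, f10, f11, f13, f32, f30, f31, f33]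
      simp (config := { decide := true }) [ev, Pi.single_apply]
      try ring
    have hb3_20 : αL3 ![g (ev 2), g (ev 0)] = αL3 ![ev 2, ev 0] := by
      rw [a3_apply, a3_apply]
      simp only [f22, f20, f21, f23, f02, f00, f01, f03, f12, f10, f11, f13, f32, f30, f31, f33]
      simp (config := { decide := true }) [ev, Pi.single_apply]
      try ring
    have hb3_21 : αL3 ![g (ev 2), g (ev 1)] = αL3 ![ev 2, ev 1] := by
      rw [a3_apply, a3_apply]
      simp only [f22, f20, f21, f23, f02, f00, f01, f03, f12, f10, f11, f13, f32, f30, f31, f33]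
      simp (config := { decide := true }) [ev, Pi.single_apply]
      linear_combination (-1 : ℝ) * hre
    have hb3_22 : αL3 ![g (ev 2), g (ev 2)] = αL3 ![ev 2, ev 2] := by
      rw [a3_apply, a3_apply]
      simp only [f22, f20, f21, f23, f02, f00, f01, f03, f12, f10, f11, f13, f32, f30, f31, f33]
      simp (config := { decide := true }) [ev, Pi.single_apply]
      try ring
    have hb3_23 : αL3 ![g (ev 2), g (ev 3)] = αL3 ![ev 2, ev 3] := by
      rw [a3_apply, a3_apply]
      simp only [f22, f20, f21, f23, f02, f00, f01, f03, f12, f10, f11, f13, f32, f30, f31, f33]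
      simp (config := { decide := true }) [ev, Pi.single_apply]
      linear_combination (1 : ℝ) * him
    have hb3_30 : αL3 ![g (ev 3), g (ev 0)] = αL3 ![ev 3, ev 0] := by
      rw [a3_apply, a3_apply]
      simp only [f22, f20, f21, f23, f02, f00, f01, f03, f12, f10, f11, f13, f32, f30, f31, f33]
      simp (config := { decide := true }) [ev, Pi.single_apply]
      linear_combination (-1 : ℝ) * hre
    have hb3_31 : αL3 ![g (ev 3), g (ev 1)] = αL3 ![ev 3, ev 1] := by
      rw [a3_apply, a3_apply]
      simp only [f22, f20, f21, f23, f02, f00, f01, f03, f12, f10, f11, f13, f32, f30, f31, f33]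
      simp (config := { decide := true }) [ev, Pi.single_apply]
      try ring
    have hb3_32 : αL3 ![g (ev 3), g (ev 2)] = αL3 ![ev 3, ev 2] := by
      rw [a3_apply, a3_apply]
      simp only [f22, f20, f21, f23, f02, f00, f01, f03, f12, f10, f11, f13, f32, f30, f31, f33]
      simp (config := { decide := true }) [ev, Pi.single_apply]
      linear_combination (-1 : ℝ) * him
    have hb3_33 : αL3 ![g (ev 3), g (ev 3)] = αL3 ![ev 3, ev 3] := by
      rw [a3_apply, a3_apply]
      simp only [f22, f20, f21, f23, f02, f00, f01, f03, f12, f10, f11, f13, f32, f30, f31, f33]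
      simp (config := { decide := true }) [ev, Pi.single_apply]
      try ring
    have hall1 : ∀ i j : Fin 4, αL1 ![g (ev i), g (ev j)] = αL1 ![ev i, ev j] := by
      intro i j
      fin_cases i <;> fin_cases j <;>
        first
          | exact hb1_00
          | exact hb1_01
          | exact hb1_02
          | exact hb1_03
          | exact hb1_10
          | exact hb1_11
          | exact hb1_12
          | exact hb1_13
          | exact hb1_20
          | exact hb1_21
          | exact hb1_22
          | exact hb1_23
          | exact hb1_30
          | exact hb1_31
          | exact hb1_32
          | exact hb1_33
    have hall3 : ∀ i j : Fin 4, αL3 ![g (ev i), g (ev j)] = αL3 ![ev i, ev j] := by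
      intro i j
      fin_cases i <;> fin_cases j <;>
        first
          | exact hb3_00
          | exact hb3_01
          | exact hb3_02
          | exact hb3_03
          | exact hb3_10
          | exact hb3_11
          | exact hb3_12
          | exact hb3_13
          | exact hb3_20
          | exact hb3_21
          | exact hb3_22
          | exact hb3_23
          | exact hb3_30
          | exact hb3_31
          | exact hb3_32
          | exact hb3_33
    refine ⟨form_ext fun i j => ?_, form_ext fun i j => ?_⟩
    · rw [pull2_apply]; exact hall1 i j
    · rw [pull2_apply]; exact hall3 i j
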